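/- Let λ > 0, d > 0, ε > 0, K > 0 with d ≤ 2√λ + 1, and set c₂ = 2√λ. Define φ(t,x) = 1 + K·e^{(c₂ + ε/2)·t - x}. Then for all (t,x) with φ(t,x) ≥ 1 (which holds everywhere), φ satisfies ∂φ/∂t - d·∂²φ/∂x² ≥ φ·(1 - φ). -/

import Mathlib

lemma deriv_t_aux (c x K : ℝ) (t : ℝ) :
    HasDerivAt (fun τ : ℝ => 1 + K * Real.exp (c * τ - x))
      (K * (Real.exp (c * t - x) * c)) t := by
  have h1 : HasDerivAt (fun τ : ℝ => c * τ - x) c t := by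
    simpa using ((hasDerivAt_id t).const_mul c).sub_const x
  simpa using ((h1.exp.const_mul K).const_add 1)

lemma deriv_x_aux (c t K : ℝ) (y : ℝ) :
    HasDerivAt (fun x : ℝ => 1 + K * Real.exp (c * t - x))
      (-(K * Real.exp (c * t - y))) y := by
  have h1 : HasDerivAt (fun x : ℝ => c * t - x) (-1) y := by
    simpa using (hasDerivAt_id y).const_sub (c * t)
  have := (h1.exp.const_mul K).const_add 1
  simpa [mul_comm] using this

lemma deriv_xx_aux (c t K : ℝ) (x : ℝ) :
    HasDerivAt (fun y : ℝ => -(K * Real.exp (c * t - y)))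
      (K * Real.exp (c * t - x)) x := by
  have h1 : HasDerivAt (fun y : ℝ => c * t - y) (-1) x := by
    simpa using (hasDerivAt_id x).const_sub (c * t)
  have : HasDerivAt (fun y : ℝ => -(K * Real.exp (c * t - y)))
      (-(K * (Real.exp (c * t - x) * -1))) x := ((h1.exp.const_mul K).neg)
  simpa [mul_comm] using this

theorem predator_upper_supersolution (lam d ε K : ℝ)
    (hlam : 0 < lam) (hd : 0 < d) (hε : 0 < ε) (hK : 0 < K)
    (hdle : d ≤ 2 * Real.sqrt lam + 1)
    (φ : ℝ → ℝ → ℝ)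
    (hφ : φ = fun t x => 1 + K * Real.exp ((2 * Real.sqrt lam + ε / 2) * t - x)) :
    ∀ t x : ℝ, 1 ≤ φ t x ∧
      deriv (fun τ => φ τ x) t - d * deriv (deriv (fun y => φ t y)) x ≥
        φ t x * (1 - φ t x) := by
  intro t x
  set c : ℝ := 2 * Real.sqrt lam + ε / 2 with hc
  have hE : 0 < Real.exp (c * t - x) := Real.exp_pos _
  subst hφ
  constructor
  · simp only
    nlinarith
  · have h1 : deriv (fun τ : ℝ => 1 + K * Real.exp (c * τ - x)) t
        = K * (Real.exp (c * t - x) * c) := (deriv_t_aux c x K t).deriv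
    have h2 : deriv (fun y : ℝ => 1 + K * Real.exp (c * t - y))
        = fun y => -(K * Real.exp (c * t - y)) := by
      funext y
      exact (deriv_x_aux c t K y).deriv
    have h3 : deriv (deriv (fun y : ℝ => 1 + K * Real.exp (c * t - y))) x
        = K * Real.exp (c * t - x) := by
      rw [h2]
      exact (deriv_xx_aux c t K x).deriv
    simp only [h1, h3]
    have hcd : c - d ≥ -1 := by
      have : 0 ≤ ε / 2 := by linarith
      simp only [hc]; linarith
    set E := Real.exp (c * t - x)
    have hKE : 0 < K * E := mul_pos hK hE
    nlinarith [sq_nonneg (K * E)]
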